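/- Let (u_n) be a non-increasing sequence of positive real numbers converging to 0. Let α > 1 and C > 0, and suppose that for all sufficiently large n one has u_n − u_{n+1} ≥ C·u_n^α. Then limsup_{n→∞} n^{1/(α−1)}·u_n ≤ (C(α−1))^{−1/(α−1)}. -/

import Mathlib

open Filter Real

/-- Bernoulli-type inequality: for `0 ≤ x < 1` and `β > 0`, `1 + β*x ≤ (1-x)^(-β)`. -/
lemma bern_aux {x β : ℝ} (hx0 : 0 ≤ x) (hx1 : x < 1) (hβ : 0 < β) :
    1 + β * x ≤ (1 - x) ^ (-β) := by
  have h1x : 0 < 1 - x := by linarith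
  rcases le_or_gt 1 β with hβ1 | hβ1
  · set t : ℝ := x / (1 - x) with ht
    have ht0 : 0 ≤ t := div_nonneg hx0 h1x.le
    have h1 : 1 + β * t ≤ (1 + t) ^ β :=
      one_add_mul_self_le_rpow_one_add (by linarith) hβ1
    have h2 : 1 + t = (1 - x)⁻¹ := by
      rw [ht]; field_simp; ring
    have h3 : (1 - x)⁻¹ ^ β = (1 - x) ^ (-β) := by
      rw [Real.inv_rpow h1x.le, ← Real.rpow_neg h1x.le]
    have hxt : x ≤ t := by
      rw [ht, le_div_iff₀ h1x]
      nlinarith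
    calc 1 + β * x ≤ 1 + β * t := by nlinarith
      _ ≤ (1 + t) ^ β := h1
      _ = (1 - x)⁻¹ ^ β := by rw [h2]
      _ = (1 - x) ^ (-β) := h3
  · have h1 : (1 - x) ^ β ≤ 1 - β * x := by
      have := rpow_one_add_le_one_add_mul_self (s := -x) (by linarith) hβ.le hβ1.le
      simpa [sub_eq_add_neg, mul_neg] using this
    have hpow : 0 < (1 - x) ^ β := Real.rpow_pos_of_pos h1x β
    have h2 : (1 - x) ^ (-β) = ((1 - x) ^ β)⁻¹ := Real.rpow_neg h1x.le β
    rw [h2, ← one_div, le_div_iff₀ hpow]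
    nlinarith [mul_le_mul_of_nonneg_left h1 (show (0:ℝ) ≤ 1 + β * x by positivity),
      sq_nonneg (β * x), mul_nonneg hβ.le hx0]

/-- One-step estimate: the drop in `u` transfers to growth of `u^(-(α-1))`. -/
lemma step_aux {a b α C : ℝ} (ha : 0 < a) (hb : 0 < b) (hα : 1 < α) (hC : 0 < C)
    (hx1 : C * a ^ (α - 1) < 1) (hr : C * a ^ α ≤ a - b) :
    a ^ (-(α - 1)) + C * (α - 1) ≤ b ^ (-(α - 1)) := by
  set β := α - 1 with hβdef
  have hβ : 0 < β := by simp [hβdef]; linarith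
  set x := C * a ^ β with hxdef
  have hx0 : 0 < x := mul_pos hC (Real.rpow_pos_of_pos ha β)
  have haα : a ^ α = a * a ^ β := by
    rw [show α = 1 + β by rw [hβdef]; ring, Real.rpow_add ha, Real.rpow_one]
  have hba : b ≤ a * (1 - x) := by
    rw [haα] at hr
    rw [hxdef]; nlinarith
  have h1x : 0 < 1 - x := by nlinarith
  have hmain : (a * (1 - x)) ^ (-β) ≤ b ^ (-β) :=
    Real.rpow_le_rpow_of_nonpos hb hba (neg_nonpos.mpr hβ.le)
  have hsplit : (a * (1 - x)) ^ (-β) = a ^ (-β) * (1 - x) ^ (-β) :=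
    Real.mul_rpow ha.le h1x.le
  have hbern : 1 + β * x ≤ (1 - x) ^ (-β) := bern_aux hx0.le (by linarith) hβ
  have h0 : a ^ (-β) * a ^ β = 1 := by
    rw [← Real.rpow_add ha]; simp
  have hprod : a ^ (-β) * (1 + β * x) = a ^ (-β) + C * β := by
    calc a ^ (-β) * (1 + β * x) = a ^ (-β) + C * β * (a ^ (-β) * a ^ β) := by
          rw [hxdef]; ring
      _ = a ^ (-β) + C * β := by rw [h0]; ring
  have hapos : 0 < a ^ (-β) := Real.rpow_pos_of_pos ha _
  calc a ^ (-β) + C * β = a ^ (-β) * (1 + β * x) := hprod.symm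
    _ ≤ a ^ (-β) * (1 - x) ^ (-β) := mul_le_mul_of_nonneg_left hbern hapos.le
    _ = (a * (1 - x)) ^ (-β) := hsplit.symm
    _ ≤ b ^ (-β) := hmain

theorem stmt_1 (u : ℕ → ℝ) (hpos : ∀ n, 0 < u n)
    (hmono : ∀ n, u (n + 1) ≤ u n)
    (hlim : Tendsto u atTop (nhds 0))
    (α C : ℝ) (hα : 1 < α) (hC : 0 < C)
    (hrec : ∀ᶠ n in atTop, C * u n ^ α ≤ u n - u (n + 1)) :
    limsup (fun n : ℕ => (((n : ℝ) ^ (1 / (α - 1)) * u n : ℝ) : EReal)) atTop ≤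
      (((C * (α - 1)) ^ (-(1 / (α - 1))) : ℝ) : EReal) := by
  set β := α - 1 with hβdef
  have hβ : 0 < β := by rw [hβdef]; linarith
  set K := C * β with hKdef
  have hK : 0 < K := mul_pos hC hβ
  set v : ℕ → ℝ := fun n => u n ^ (-β) with hvdef
  have hvpos : ∀ n, 0 < v n := fun n => Real.rpow_pos_of_pos (hpos n) _
  -- eventual smallness of C * u n ^ β
  have hsmall : ∀ᶠ n in atTop, C * u n ^ β < 1 := by
    have h1 : Tendsto (fun n => u n ^ β) atTop (nhds 0) := by
      have := hlim.rpow_const (p := β) (Or.inr hβ.le)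
      simpa [Real.zero_rpow hβ.ne'] using this
    have h2 : Tendsto (fun n => C * u n ^ β) atTop (nhds 0) := by
      simpa using h1.const_mul C
    exact h2.eventually_lt_const one_pos
  obtain ⟨N₀, hN₀⟩ := eventually_atTop.mp hrec
  obtain ⟨N₁, hN₁⟩ := eventually_atTop.mp hsmall
  set N := max N₀ N₁ with hNdef
  have key : ∀ n, N ≤ n → v n + K ≤ v (n + 1) := by
    intro n hn
    exact step_aux (hpos n) (hpos (n + 1)) hα hC
      (hN₁ n (le_trans (le_max_right _ _) hn)) (hN₀ n (le_trans (le_max_left _ _) hn))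
  have growth : ∀ n, N ≤ n → v N + ((n : ℝ) - N) * K ≤ v n := by
    intro n hn
    induction n, hn using Nat.le_induction with
    | base => simp
    | succ n hn ih =>
      have := key n hn
      push_cast
      push_cast at ih
      linarith
  set A : ℕ → ℝ := fun n => v N + ((n : ℝ) - N) * K with hAdef
  have hApos : ∀ n, N ≤ n → 0 < A n := by
    intro n hn
    have : (0:ℝ) ≤ ((n : ℝ) - N) * K := by
      apply mul_nonneg _ hK.le
      have : (N:ℝ) ≤ n := Nat.cast_le.mpr hn
      linarith
    have := hvpos N
    simp only [hAdef]
    linarith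
  have hub : ∀ n, N ≤ n → u n ≤ A n ^ (-(1 / β)) := by
    intro n hn
    have h1 : A n ≤ v n := growth n hn
    have h2 : v n ^ (-(1 / β)) ≤ A n ^ (-(1 / β)) :=
      Real.rpow_le_rpow_of_nonpos (hApos n hn) h1 (neg_nonpos.mpr (by positivity))
    have h3 : v n ^ (-(1 / β)) = u n := by
      rw [hvdef]
      simp only
      rw [← Real.rpow_mul (hpos n).le]
      rw [show (-β) * (-(1/β)) = 1 by field_simp, Real.rpow_one]
    linarith [h2, h3 ▸ h2]
  set g : ℕ → ℝ := fun n => ((n : ℝ) / A n) ^ (1 / β) with hgdef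
  have hfg : ∀ n, max N 1 ≤ n → (n : ℝ) ^ (1 / β) * u n ≤ g n := by
    intro n hn
    have hn1 : 1 ≤ n := le_trans (le_max_right _ _) hn
    have hnN : N ≤ n := le_trans (le_max_left _ _) hn
    have hn0 : (0:ℝ) < n := by exact_mod_cast hn1
    have h1 : (n : ℝ) ^ (1 / β) * u n ≤ (n : ℝ) ^ (1 / β) * A n ^ (-(1 / β)) :=
      mul_le_mul_of_nonneg_left (hub n hnN) (Real.rpow_nonneg hn0.le _)
    have h2 : g n = (n : ℝ) ^ (1 / β) * A n ^ (-(1 / β)) := by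
      rw [hgdef]
      simp only
      rw [Real.div_rpow hn0.le (hApos n hnN).le, Real.rpow_neg (hApos n hnN).le,
        div_eq_mul_inv]
    linarith [h2 ▸ h1]
  -- limit of g
  have hratio : Tendsto (fun n : ℕ => (n : ℝ) / A n) atTop (nhds K⁻¹) := by
    set c : ℝ := v N - (N : ℝ) * K with hcdef
    have h1 : Tendsto (fun n : ℕ => K + c / (n : ℝ)) atTop (nhds K) := by
      have := tendsto_const_div_atTop_nhds_zero_nat c
      simpa using tendsto_const_nhds.add this
    have h2 : Tendsto (fun n : ℕ => (K + c / (n : ℝ))⁻¹) atTop (nhds K⁻¹) :=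
      h1.inv₀ hK.ne'
    apply h2.congr'
    filter_upwards [eventually_ge_atTop (max N 1)] with n hn
    have hn1 : 1 ≤ n := le_trans (le_max_right _ _) hn
    have hnN : N ≤ n := le_trans (le_max_left _ _) hn
    have hn0 : (0:ℝ) < n := by exact_mod_cast hn1
    have hA0 : 0 < A n := hApos n hnN
    have hAeq : A n = K * n + c := by rw [hAdef, hcdef]; ring
    rw [hAeq]
    rw [hAeq] at hA0
    field_simp
  have hg : Tendsto g atTop (nhds (K ^ (-(1 / β)))) := by
    have h1 : Tendsto g atTop (nhds (K⁻¹ ^ (1 / β))) :=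
      hratio.rpow_const (Or.inr (by positivity))
    have h2 : K⁻¹ ^ (1 / β) = K ^ (-(1 / β)) := by
      rw [Real.inv_rpow hK.le, ← Real.rpow_neg hK.le]
    rwa [h2] at h1
  have hgE : Tendsto (fun n => ((g n : ℝ) : EReal)) atTop
      (nhds ((K ^ (-(1 / β)) : ℝ) : EReal)) :=
    (continuous_coe_real_ereal.tendsto _).comp hg
  have hgl : limsup (fun n => ((g n : ℝ) : EReal)) atTop = ((K ^ (-(1 / β)) : ℝ) : EReal) :=
    hgE.limsup_eq
  refine le_trans (limsup_le_limsup ?_) hgl.le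
  filter_upwards [eventually_ge_atTop (max N 1)] with n hn
  exact EReal.coe_le_coe_iff.mpr (hfg n hn)
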